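/- Let (V, m) be a σ-finite measure space, k : V × V → [0,∞) measurable, and σ(w) = ∫_V k(v, w) dm(v) assumed finite for a.e. w. For δ > 0 set Σ_δ = {v ∈ V : σ(v) ≤ δ} and define the truncated operator (K̄^{(δ)} f)(v) = 1_{Σ_δ}(v) ∫_V k(v, w) f(w) dm(w). If for some integer n ≥ 0 the function ϑₙ(w) = σ(w)^{-1} ∫_V σ(v)^{-n} k(v, w) dm(v) is essentially bounded, then for every f with ∫_V σ(w)|f(w)| dm(w) < ∞ one has ∫_V |K̄^{(δ)} f(v)| dm(v) ≤ δⁿ ‖ϑₙ‖_∞ ∫_V σ(w)|f(w)| dm(w). -/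

import Mathlib

open MeasureTheory ENNReal

theorem stmt3 {V : Type*} [MeasurableSpace V] (m : Measure V) [SigmaFinite m]
    (κ : V → V → ℝ≥0∞) (hκ : Measurable (fun p : V × V => κ p.1 p.2))
    (σ : V → ℝ≥0∞) (hσ : ∀ w, σ w = ∫⁻ v, κ v w ∂m)
    (hσfin : ∀ᵐ w ∂m, σ w < ⊤)
    (f : V → ℝ≥0∞) (hf : Measurable f)
    (n : ℕ) (C : ℝ≥0∞)
    (hϑ : ∀ᵐ w ∂m, (σ w)⁻¹ * ∫⁻ v, ((σ v) ^ n)⁻¹ * κ v w ∂m ≤ C)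
    (δ : ℝ≥0∞) (hδ : 0 < δ)
    (hfin : ∫⁻ w, σ w * f w ∂m < ⊤) :
    ∫⁻ v, Set.indicator {v' : V | σ v' ≤ δ} (fun v' => ∫⁻ w, κ v' w * f w ∂m) v ∂m
      ≤ δ ^ n * C * ∫⁻ w, σ w * f w ∂m := by
  have hσm : Measurable σ := by
    have h1 : Measurable fun w => ∫⁻ v, κ v w ∂m :=
      Measurable.lintegral_prod_right' (hκ.comp measurable_swap)
    have : σ = fun w => ∫⁻ v, κ v w ∂m := funext hσ
    rw [this]; exact h1
  set S : Set V := {v' : V | σ v' ≤ δ} with hSdef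
  have hSm : MeasurableSet S := hσm measurableSet_Iic
  have hκw : ∀ w, Measurable fun v => κ v w := fun w =>
    hκ.comp (measurable_id.prodMk measurable_const)
  -- rewrite indicator inside
  have key : ∀ v, S.indicator (fun v' => ∫⁻ w, κ v' w * f w ∂m) v
      = ∫⁻ w, S.indicator (fun v' => κ v' w) v * f w ∂m := by
    intro v
    by_cases hv : v ∈ S
    · simp [Set.indicator_of_mem hv]
    · simp [Set.indicator_of_notMem hv]
  simp_rw [key]
  have hmeas : Measurable fun p : V × V => S.indicator (fun v' => κ v' p.2) p.1 * f p.2 := by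
    apply Measurable.mul _ (hf.comp measurable_snd)
    have : (fun p : V × V => S.indicator (fun v' => κ v' p.2) p.1)
        = (S ×ˢ Set.univ).indicator (fun p : V × V => κ p.1 p.2) := by
      ext p; by_cases hp : p.1 ∈ S <;> simp [Set.indicator, hp]
    rw [this]; exact hκ.indicator (hSm.prod MeasurableSet.univ)
  rw [lintegral_lintegral_swap hmeas.aemeasurable]
  have pull : ∀ w, ∫⁻ v, S.indicator (fun v' => κ v' w) v * f w ∂m
      = (∫⁻ v, S.indicator (fun v' => κ v' w) v ∂m) * f w := fun w =>
    lintegral_mul_const _ ((hκw w).indicator hSm)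
  simp_rw [pull]
  have hbound : ∀ᵐ w ∂m,
      (∫⁻ v, S.indicator (fun v' => κ v' w) v ∂m) * f w ≤ δ ^ n * C * (σ w * f w) := by
    filter_upwards [hϑ, hσfin] with w hϑw hσw
    have inner : (∫⁻ v, S.indicator (fun v' => κ v' w) v ∂m) ≤ δ ^ n * C * σ w := by
      by_cases h0 : σ w = 0
      · have : (∫⁻ v, S.indicator (fun v' => κ v' w) v ∂m) ≤ ∫⁻ v, κ v w ∂m :=
          lintegral_mono fun v => Set.indicator_le_self _ _ v
        rw [← hσ w, h0] at this
        simpa [h0] using this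
      · -- pointwise: indicator ≤ δ^n * ((σ v)^n)⁻¹ * κ v w, a.e. in v
        have step1 : (∫⁻ v, S.indicator (fun v' => κ v' w) v ∂m)
            ≤ ∫⁻ v, δ ^ n * (((σ v) ^ n)⁻¹ * κ v w) ∂m := by
          apply lintegral_mono_ae
          filter_upwards [hσfin] with v hσv
          by_cases hv : v ∈ S
          · rw [Set.indicator_of_mem hv]
            have h1 : (1 : ℝ≥0∞) ≤ δ ^ n * ((σ v) ^ n)⁻¹ := by
              rcases Nat.eq_zero_or_pos n with hn | hn
              · simp [hn]
              · by_cases hv0 : σ v = 0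
                · rw [hv0, zero_pow hn.ne', ENNReal.inv_zero,
                    ENNReal.mul_top (pow_ne_zero n hδ.ne')]
                  exact le_top
                · have hle : (σ v) ^ n ≤ δ ^ n := pow_le_pow_left' hv n
                  calc (1 : ℝ≥0∞) = (σ v) ^ n * ((σ v) ^ n)⁻¹ :=
                        (ENNReal.mul_inv_cancel (pow_ne_zero n hv0)
                          (pow_ne_top hσv.ne)).symm
                    _ ≤ δ ^ n * ((σ v) ^ n)⁻¹ := mul_le_mul_left hle _
            calc κ v w = 1 * κ v w := (one_mul _).symm
              _ ≤ (δ ^ n * ((σ v) ^ n)⁻¹) * κ v w := mul_le_mul_left h1 _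
              _ = δ ^ n * (((σ v) ^ n)⁻¹ * κ v w) := by ring
          · rw [Set.indicator_of_notMem hv]; exact zero_le
        have step2 : ∫⁻ v, δ ^ n * (((σ v) ^ n)⁻¹ * κ v w) ∂m
            = δ ^ n * ∫⁻ v, ((σ v) ^ n)⁻¹ * κ v w ∂m :=
          lintegral_const_mul _ (((hσm.pow_const n).inv).mul (hκw w))
        have step3 : ∫⁻ v, ((σ v) ^ n)⁻¹ * κ v w ∂m ≤ C * σ w := by
          have := mul_le_mul_right hϑw (σ w)
          rwa [← mul_assoc, ENNReal.mul_inv_cancel h0 hσw.ne, one_mul, mul_comm] at this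
        calc (∫⁻ v, S.indicator (fun v' => κ v' w) v ∂m)
            ≤ δ ^ n * ∫⁻ v, ((σ v) ^ n)⁻¹ * κ v w ∂m := step1.trans_eq step2
          _ ≤ δ ^ n * (C * σ w) := mul_le_mul_right step3 _
          _ = δ ^ n * C * σ w := by ring
    calc (∫⁻ v, S.indicator (fun v' => κ v' w) v ∂m) * f w
        ≤ (δ ^ n * C * σ w) * f w := mul_le_mul_left inner _
      _ = δ ^ n * C * (σ w * f w) := by ring
  calc ∫⁻ w, (∫⁻ v, S.indicator (fun v' => κ v' w) v ∂m) * f w ∂m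
      ≤ ∫⁻ w, δ ^ n * C * (σ w * f w) ∂m := lintegral_mono_ae hbound
    _ = δ ^ n * C * ∫⁻ w, σ w * f w ∂m := lintegral_const_mul _ (hσm.mul hf)
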